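/- Let K be a field trivially ℤ-graded, n a positive integer, and γ_1,…,γ_n and δ_1,…,δ_n arbitrary integers. Then M_n(K)(γ_1,…,γ_n) is graded isomorphic to M_n(K)(δ_1,…,δ_n) if and only if there exist an integer c and a permutation π of {1,…,n} such that δ_i = γ_{π(i)} + c for all i = 1,…,n. -/

import Mathlib

/-- Degree-`d` component of `Mₙ(K)(γ₁,…,γₙ)` over a trivially ℤ-graded field `K`:
the `K`-linear span of the matrix units `e i j` with `γ i - γ j = d`, i.e. the
matrices vanishing at every position `(i,j)` with `γ i - γ j ≠ d`. -/
def matComp (K : Type*) [Field K] {n : ℕ} (γ : Fin n → ℤ) (d : ℤ) :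
    Set (Matrix (Fin n) (Fin n) K) :=
  {x | ∀ i j, γ i - γ j ≠ d → x i j = 0}

namespace Stmt4Proof
open Matrix

variable {K : Type*} [Field K] {n : ℕ}

def P (γ : Fin n → ℤ) (a : ℤ) : Matrix (Fin n) (Fin n) K :=
  diagonal fun i => if γ i = a then (1 : K) else 0

lemma P_mem (γ : Fin n → ℤ) (a : ℤ) : (P γ a : Matrix (Fin n) (Fin n) K) ∈ matComp K γ 0 := by
  intro i j hij
  have hne : i ≠ j := by rintro rfl; simp at hij
  simp [P, diagonal_apply_ne _ hne]

lemma P_mul_self (γ : Fin n → ℤ) (a : ℤ) : (P γ a : Matrix (Fin n) (Fin n) K) * P γ a = P γ a := by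
  have h : (fun i => (if γ i = a then (1:K) else 0) * (if γ i = a then 1 else 0))
      = fun i => if γ i = a then (1:K) else 0 := by
    funext i
    by_cases h : γ i = a <;> simp [h]
  rw [P, diagonal_mul_diagonal, h]

lemma P_mul_P (γ : Fin n → ℤ) {a b : ℤ} (hab : a ≠ b) :
    (P γ a : Matrix (Fin n) (Fin n) K) * P γ b = 0 := by
  rw [P, P, diagonal_mul_diagonal]
  have : (fun i => (if γ i = a then (1:K) else 0) * (if γ i = b then 1 else 0)) = fun _ => 0 := by
    ext i
    by_cases h : γ i = a <;> by_cases h' : γ i = b <;> simp_all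
  rw [this, diagonal_zero]

lemma sum_P (γ : Fin n → ℤ) :
    (∑ a ∈ Finset.image γ Finset.univ, (P γ a : Matrix (Fin n) (Fin n) K)) = 1 := by
  ext i j
  rw [Matrix.sum_apply]
  by_cases hij : i = j
  · subst hij
    rw [Matrix.one_apply_eq]
    have : ∀ a ∈ Finset.image γ Finset.univ, (P γ a : Matrix (Fin n) (Fin n) K) i i
        = if a = γ i then 1 else 0 := by
      intro a _
      simp [P, diagonal_apply_eq, eq_comm]
    rw [Finset.sum_congr rfl this, Finset.sum_ite_eq' (Finset.image γ Finset.univ) (γ i)]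
    simp
  · rw [Matrix.one_apply_ne hij]
    apply Finset.sum_eq_zero
    intro a _
    simp [P, diagonal_apply_ne _ hij]

lemma P_comm (γ : Fin n → ℤ) (a : ℤ) {x : Matrix (Fin n) (Fin n) K}
    (hx : x ∈ matComp K γ 0) : P γ a * x = x * P γ a := by
  ext i j
  rw [P, diagonal_mul, mul_diagonal]
  by_cases hij : γ i = γ j
  · rw [hij]
    ring
  · rw [hx i j (by omega)]
    ring

lemma smul_one_inj (hn : 0 < n) {m m' : K}
    (h : m • (1 : Matrix (Fin n) (Fin n) K) = m' • 1) : m = m' := by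
  have := congrFun (congrFun h ⟨0, hn⟩) ⟨0, hn⟩
  simpa [Matrix.smul_apply, Matrix.one_apply_eq] using this

lemma scalar_image (φ : Matrix (Fin n) (Fin n) K ≃+* Matrix (Fin n) (Fin n) K) (l : K) :
    ∃ m : K, φ (l • 1) = m • 1 := by
  have hcomm : ∀ i j : Fin n, i ≠ j → Commute (Matrix.single i j 1) (φ (l • 1)) := by
    intro i j _
    obtain ⟨x, hx⟩ : ∃ x, φ x = Matrix.single i j 1 := ⟨φ.symm _, φ.apply_symm_apply _⟩
    show Matrix.single i j 1 * φ (l • 1) = φ (l • 1) * Matrix.single i j 1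
    rw [← hx]
    rw [← _root_.map_mul, ← _root_.map_mul]
    congr 1
    rw [smul_mul_assoc, mul_smul_comm, one_mul, mul_one]
  obtain ⟨r, hr⟩ := mem_range_scalar_of_commute_single hcomm
  refine ⟨r, ?_⟩
  rw [← hr]
  ext i j
  by_cases hij : i = j
  · subst hij; simp [Matrix.scalar_apply, Matrix.smul_apply, Matrix.one_apply_eq]
  · simp [Matrix.scalar_apply, Matrix.smul_apply, Matrix.one_apply_ne hij,
      Matrix.diagonal_apply_ne _ hij]


lemma imageP (γ δ : Fin n → ℤ) (ψ : Matrix (Fin n) (Fin n) K ≃+* Matrix (Fin n) (Fin n) K)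
    (hψ : ∀ d : ℤ, ψ '' matComp K γ d = matComp K δ d) (a : ℤ) :
    ∃ ε : Fin n → K, ψ (P γ a) = diagonal ε ∧ (∀ i, ε i = 0 ∨ ε i = 1) ∧
      (∀ i j, δ i = δ j → ε i = ε j) := by
  set p := ψ (P γ a) with hp
  have hpmem : p ∈ matComp K δ 0 := by
    rw [← hψ 0]; exact ⟨_, P_mem γ a, rfl⟩
  have hcomm : ∀ y ∈ matComp K δ 0, p * y = y * p := by
    intro y hy
    rw [← hψ 0] at hy
    obtain ⟨x, hx, rfl⟩ := hy
    rw [← _root_.map_mul, ← _root_.map_mul, P_comm γ a hx]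
  have hoffdiag : ∀ i j : Fin n, i ≠ j → p i j = 0 := by
    intro i j hij
    have hE : Matrix.single j j (1:K) ∈ matComp K δ 0 := by
      intro k l hkl
      apply Matrix.single_apply_of_ne
      rintro ⟨rfl, rfl⟩; exact hkl (by ring)
    have h := congrFun (congrFun (hcomm _ hE) i) j
    rw [Matrix.mul_single_apply_same, Matrix.single_mul_apply_of_ne _ _ _ i j hij]
      at h
    simpa using h
  have hfib : ∀ i j : Fin n, δ i = δ j → p i i = p j j := by
    intro i j hδ
    rcases eq_or_ne i j with rfl | hij
    · rfl
    have hE : Matrix.single i j (1:K) ∈ matComp K δ 0 := by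
      intro k l hkl
      apply Matrix.single_apply_of_ne
      rintro ⟨rfl, rfl⟩; exact hkl (by omega)
    have h := congrFun (congrFun (hcomm _ hE) i) j
    rw [Matrix.mul_single_apply_same, Matrix.single_mul_apply_same] at h
    simpa using h
  have hdiag : p = diagonal (fun i => p i i) := by
    ext i j
    rcases eq_or_ne i j with rfl | hij
    · rw [diagonal_apply_eq]
    · rw [diagonal_apply_ne _ hij, hoffdiag i j hij]
  refine ⟨fun i => p i i, hdiag, ?_, hfib⟩
  intro i
  have hidem : p * p = p := by
    rw [hp, ← _root_.map_mul, P_mul_self]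
  have h := congrFun (congrFun hidem i) i
  rw [hdiag] at h
  rw [diagonal_mul_diagonal] at h
  simp only [diagonal_apply_eq] at h
  rcases eq_or_ne (p i i) 0 with h0 | h0
  · exact Or.inl h0
  · right
    have h1 : p i i * (p i i - 1) = 0 := by linear_combination h
    rcases mul_eq_zero.mp h1 with h2 | h2
    · exact absurd h2 h0
    · exact sub_eq_zero.mp h2

def colSpace (f : Fin n → ℤ) (a : ℤ) : Submodule K (Matrix (Fin n) (Fin n) K) where
  carrier := {x | ∀ i j, f j ≠ a → x i j = 0}
  add_mem' := by
    intro x y hx hy i j h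
    simp only [Matrix.add_apply, hx i j h, hy i j h, add_zero]
  zero_mem' := by intro i j h; rfl
  smul_mem' := by
    intro c x hx i j h
    simp only [Matrix.smul_apply, hx i j h, smul_zero]

noncomputable def colEquiv (f : Fin n → ℤ) (a : ℤ) :
    (colSpace (K := K) f a) ≃ₗ[K] (Fin n × {j : Fin n // f j = a} → K) where
  toFun x := fun q => (x : Matrix (Fin n) (Fin n) K) q.1 q.2.1
  map_add' x y := rfl
  map_smul' c x := rfl
  invFun y := ⟨Matrix.of fun i j => if h : f j = a then y (i, ⟨j, h⟩) else 0, by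
    intro i j h
    simp [h]⟩
  left_inv := by
    intro x
    apply Subtype.ext
    ext i j
    by_cases h : f j = a
    · simp [h]
    · simp [h, x.2 i j h]
  right_inv := by
    intro y
    funext q
    obtain ⟨i, j, hj⟩ := q
    simp [hj]

lemma finrank_colSpace (f : Fin n → ℤ) (a : ℤ) :
    Module.finrank K (colSpace (K := K) f a) = n * Fintype.card {j : Fin n // f j = a} := by
  rw [(colEquiv f a).finrank_eq]
  simp [Module.finrank_fintype_fun_eq_card, Fintype.card_prod]


lemma forward_linear (hn : 0 < n) (γ δ : Fin n → ℤ)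
    (ψ : Matrix (Fin n) (Fin n) K ≃+* Matrix (Fin n) (Fin n) K)
    (hψ : ∀ d : ℤ, ψ '' matComp K γ d = matComp K δ d)
    (hlin : ∀ (l : K) x, ψ (l • x) = l • ψ x) :
    ∃ (c : ℤ) (π : Equiv.Perm (Fin n)), ∀ i, δ i = γ (π i) + c := by
  classical
  choose ε hdiag hval hfib using imageP γ δ ψ hψ
  -- completeness
  have hsum : ∀ i : Fin n, (∑ a ∈ Finset.image γ Finset.univ, ε a i) = 1 := by
    intro i
    have h1 : (∑ a ∈ Finset.image γ Finset.univ, ψ (P γ a)) = 1 := by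
      rw [← map_sum, sum_P, _root_.map_one]
    have h2 := congrFun (congrFun h1 i) i
    rw [Matrix.sum_apply] at h2
    calc (∑ a ∈ Finset.image γ Finset.univ, ε a i)
        = ∑ a ∈ Finset.image γ Finset.univ, (ψ (P γ a)) i i := by
          refine Finset.sum_congr rfl fun a _ => ?_
          rw [hdiag a, diagonal_apply_eq]
      _ = (1 : Matrix (Fin n) (Fin n) K) i i := h2
      _ = 1 := Matrix.one_apply_eq i
  have horth : ∀ a b : ℤ, a ≠ b → ∀ i, ε a i * ε b i = 0 := by
    intro a b hab i
    have h1 : ψ (P γ a) * ψ (P γ b) = 0 := by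
      rw [← _root_.map_mul, P_mul_P γ hab, map_zero]
    rw [hdiag a, hdiag b, diagonal_mul_diagonal] at h1
    have := congrFun (congrFun h1 i) i
    simpa using this
  -- define θ
  have hexists : ∀ i : Fin n, ∃ a, a ∈ Finset.image γ Finset.univ ∧ ε a i = 1 := by
    intro i
    by_contra hcon
    push_neg at hcon
    have : (∑ a ∈ Finset.image γ Finset.univ, ε a i) = 0 := by
      refine Finset.sum_eq_zero fun a ha => ?_
      rcases hval a i with h | h
      · exact h
      · exact absurd h (hcon a ha)
    rw [hsum i] at this
    exact one_ne_zero this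
  choose θ hθS hθ1 using hexists
  have hθuniq : ∀ a (i : Fin n), ε a i = 1 → a = θ i := by
    intro a i h1
    by_contra hne
    have := horth a (θ i) hne i
    rw [h1, hθ1 i, one_mul] at this
    exact one_ne_zero this
  have hε0 : ∀ a (j : Fin n), θ j ≠ a → ε a j = 0 := by
    intro a j hne
    rcases hval a j with h | h
    · exact h
    · exact absurd (hθuniq a j h).symm hne
  -- cross relation θ i - θ j = δ i - δ j
  have hcross : ∀ i j : Fin n, θ i - θ j = δ i - δ j := by
    intro i j
    have hz : Matrix.single i j (1:K) ∈ matComp K δ (δ i - δ j) := by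
      intro k l hkl
      apply Matrix.single_apply_of_ne
      rintro ⟨rfl, rfl⟩; exact hkl rfl
    rw [← hψ (δ i - δ j)] at hz
    obtain ⟨w, hw, hwz⟩ := hz
    have hne : ψ (P γ (θ i) * w * P γ (θ j)) ≠ 0 := by
      intro h0
      rw [_root_.map_mul, _root_.map_mul, hdiag, hdiag, hwz] at h0
      have h1 := congrFun (congrFun h0 i) j
      rw [Matrix.mul_diagonal, Matrix.diagonal_mul, Matrix.single_apply_same,
        hθ1 i, hθ1 j] at h1
      simp at h1
    have hu : P γ (θ i) * w * P γ (θ j) ≠ 0 := by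
      intro h; exact hne (by rw [h, map_zero])
    set u : Matrix (Fin n) (Fin n) K := P γ (θ i) * w * P γ (θ j) with hu_def
    obtain ⟨k, l, hkl⟩ : ∃ k l, u k l ≠ 0 := by
      by_contra hcon
      push_neg at hcon
      exact hu (Matrix.ext fun k l => hcon k l)
    have hentry : u k l
        = (if γ k = θ i then (1:K) else 0) * w k l * (if γ l = θ j then 1 else 0) := by
      rw [hu_def]
      simp only [P, Matrix.mul_diagonal, Matrix.diagonal_mul]
    rw [hentry] at hkl
    have h1 : γ k = θ i := by
      by_contra h; rw [if_neg h] at hkl; simp at hkl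
    have h2 : γ l = θ j := by
      by_contra h; rw [if_neg h] at hkl; simp at hkl
    have h3 : w k l ≠ 0 := by
      intro h; rw [h] at hkl; simp at hkl
    have h4 : γ k - γ l = δ i - δ j := by
      by_contra h; exact h3 (hw k l h)
    omega
  -- linear equiv
  let Ψ : Matrix (Fin n) (Fin n) K ≃ₗ[K] Matrix (Fin n) (Fin n) K :=
    { toFun := ψ, invFun := ψ.symm,
      left_inv := fun x => ψ.symm_apply_apply x,
      right_inv := fun x => ψ.apply_symm_apply x,
      map_add' := fun x y => map_add ψ x y,
      map_smul' := fun c x => hlin c x }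
  -- membership characterizations
  have hPmem : ∀ (a : ℤ) (x : Matrix (Fin n) (Fin n) K),
      x * P γ a = x ↔ x ∈ colSpace (K := K) γ a := by
    intro a x
    constructor
    · intro h i j hj
      have := congrFun (congrFun h i) j
      rw [P, Matrix.mul_diagonal, if_neg hj, mul_zero] at this
      exact this.symm
    · intro h
      ext i j
      rw [P, Matrix.mul_diagonal]
      by_cases hj : γ j = a
      · rw [if_pos hj, mul_one]
      · rw [if_neg hj, mul_zero, h i j hj]
  have hQmem : ∀ (a : ℤ) (y : Matrix (Fin n) (Fin n) K),
      y * ψ (P γ a) = y ↔ y ∈ colSpace (K := K) θ a := by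
    intro a y
    rw [hdiag a]
    constructor
    · intro h i j hj
      have := congrFun (congrFun h i) j
      rw [Matrix.mul_diagonal, hε0 a j hj, mul_zero] at this
      exact this.symm
    · intro h
      ext i j
      rw [Matrix.mul_diagonal]
      by_cases hj : θ j = a
      · rw [← hj, hθ1 j, mul_one]
      · rw [hε0 a j hj, mul_zero, h i j hj]
  have himg : ∀ a : ℤ, Submodule.map (Ψ : Matrix (Fin n) (Fin n) K →ₗ[K] _)
      (colSpace (K := K) γ a) = colSpace (K := K) θ a := by
    intro a
    ext y
    simp only [Submodule.mem_map]
    constructor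
    · rintro ⟨x, hx, rfl⟩
      rw [← hQmem]
      show ψ x * ψ (P γ a) = ψ x
      rw [← _root_.map_mul, (hPmem a x).mpr hx]
    · intro hy
      refine ⟨ψ.symm y, ?_, ψ.apply_symm_apply y⟩
      rw [← hPmem]
      apply ψ.injective
      rw [_root_.map_mul, ψ.apply_symm_apply, (hQmem a y).mpr hy]
  have hcard : ∀ a : ℤ, Fintype.card {j : Fin n // γ j = a}
      = Fintype.card {j : Fin n // θ j = a} := by
    intro a
    have h3 : Module.finrank K (colSpace (K := K) γ a)
        = Module.finrank K (colSpace (K := K) θ a) := by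
      rw [← himg a]
      exact (LinearEquiv.finrank_map_eq Ψ (colSpace (K := K) γ a)).symm
    rw [finrank_colSpace γ a, finrank_colSpace θ a] at h3
    exact Nat.eq_of_mul_eq_mul_left hn h3
  -- build permutation
  set i0 : Fin n := ⟨0, hn⟩
  refine ⟨δ i0 - θ i0, ?_⟩
  have hc : ∀ i, δ i = θ i + (δ i0 - θ i0) := by
    intro i
    have := hcross i i0
    omega
  let e : ∀ a : ℤ, {j : Fin n // θ j = a} ≃ {j : Fin n // γ j = a} :=
    fun a => Fintype.equivOfCardEq (hcard a).symm
  let π : Equiv.Perm (Fin n) :=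
    (Equiv.sigmaFiberEquiv θ).symm.trans
      ((Equiv.sigmaCongrRight e).trans (Equiv.sigmaFiberEquiv γ))
  refine ⟨π, fun i => ?_⟩
  have hπ : γ (π i) = θ i := (e (θ i) ⟨i, rfl⟩).2
  rw [hπ]
  exact hc i


lemma forward (hn : 0 < n) (γ δ : Fin n → ℤ)
    (φ : Matrix (Fin n) (Fin n) K ≃+* Matrix (Fin n) (Fin n) K)
    (hφ : ∀ d : ℤ, φ '' matComp K γ d = matComp K δ d) :
    ∃ (c : ℤ) (π : Equiv.Perm (Fin n)), ∀ i, δ i = γ (π i) + c := by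
  classical
  choose σf hσf using scalar_image φ
  choose σg hσg using scalar_image φ.symm
  have hleft : ∀ l : K, σg (σf l) = l := by
    intro l
    apply smul_one_inj hn
    rw [← hσg (σf l), ← hσf l, φ.symm_apply_apply]
  have hright : ∀ l : K, σf (σg l) = l := by
    intro l
    apply smul_one_inj hn
    rw [← hσf (σg l), ← hσg l, φ.apply_symm_apply]
  have hmul : ∀ a b : K, σf (a * b) = σf a * σf b := by
    intro a b
    apply smul_one_inj hn
    rw [← hσf (a * b)]
    have h1 : (a * b) • (1 : Matrix (Fin n) (Fin n) K) = (a • 1) * (b • 1) := by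
      rw [smul_mul_assoc, mul_smul_comm, one_mul, smul_smul]
    rw [h1, _root_.map_mul, hσf a, hσf b, smul_mul_assoc, mul_smul_comm, one_mul, smul_smul]
  have hadd : ∀ a b : K, σf (a + b) = σf a + σf b := by
    intro a b
    apply smul_one_inj hn
    rw [← hσf (a + b), add_smul, map_add, hσf a, hσf b, add_smul]
  let σ : K ≃+* K :=
    { toFun := σf, invFun := σg, left_inv := hleft, right_inv := hright,
      map_mul' := hmul, map_add' := hadd }
  let ψ : Matrix (Fin n) (Fin n) K ≃+* Matrix (Fin n) (Fin n) K :=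
    φ.trans (RingEquiv.mapMatrix σ.symm)
  have hψapp : ∀ x, ψ x = (φ x).map σ.symm := fun _ => rfl
  have hψ : ∀ d : ℤ, ψ '' matComp K γ d = matComp K δ d := by
    intro d
    have hcomp : (ψ : Matrix (Fin n) (Fin n) K → Matrix (Fin n) (Fin n) K)
        = (fun y => y.map σ.symm) ∘ φ := rfl
    rw [hcomp, Set.image_comp, hφ d]
    ext y
    constructor
    · rintro ⟨x, hx, rfl⟩
      intro i j hij
      show σ.symm (x i j) = 0
      rw [hx i j hij, map_zero]
    · intro hy
      refine ⟨y.map σ, ?_, ?_⟩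
      · intro i j hij
        show σ (y i j) = 0
        rw [hy i j hij, map_zero]
      · ext i j
        show σ.symm (σ (y i j)) = y i j
        exact σ.symm_apply_apply _
  have hlin : ∀ (l : K) (x : Matrix (Fin n) (Fin n) K), ψ (l • x) = l • ψ x := by
    intro l x
    have h1 : φ (l • x) = σf l • φ x := by
      have h2 : l • x = (l • 1) * x := by rw [smul_mul_assoc, one_mul]
      rw [h2, _root_.map_mul, hσf l, smul_mul_assoc, one_mul]
    rw [hψapp, hψapp, h1]
    ext i j
    show σ.symm (σf l * (φ x) i j) = l • σ.symm ((φ x) i j)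
    rw [_root_.map_mul]
    have : σ.symm (σf l) = l := hleft l
    rw [this, smul_eq_mul]
  exact forward_linear hn γ δ ψ hψ hlin

lemma easy (γ δ : Fin n → ℤ) (c : ℤ) (π : Equiv.Perm (Fin n))
    (h : ∀ i, δ i = γ (π i) + c) :
    ∃ φ : Matrix (Fin n) (Fin n) K ≃+* Matrix (Fin n) (Fin n) K,
      ∀ d : ℤ, φ '' matComp K γ d = matComp K δ d := by
  refine ⟨(Matrix.reindexAlgEquiv K K π.symm).toRingEquiv, fun d => ?_⟩
  have happ : ∀ (x : Matrix (Fin n) (Fin n) K) (i j : Fin n),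
      ((Matrix.reindexAlgEquiv K K π.symm).toRingEquiv x) i j = x (π i) (π j) := by
    intro x i j
    simp [Matrix.reindexAlgEquiv, Matrix.reindex, Matrix.submatrix_apply]
  ext y
  constructor
  · rintro ⟨x, hx, rfl⟩
    intro i j hij
    rw [happ]
    apply hx
    have := h i; have := h j
    omega
  · intro hy
    refine ⟨(Matrix.reindexAlgEquiv K K π).toRingEquiv y, ?_, ?_⟩
    · intro i j hij
      have happ2 : ((Matrix.reindexAlgEquiv K K π).toRingEquiv y) i j
          = y (π.symm i) (π.symm j) := by
        simp [Matrix.reindexAlgEquiv, Matrix.reindex, Matrix.submatrix_apply]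
      rw [happ2]
      apply hy
      have h1 := h (π.symm i); have h2 := h (π.symm j)
      rw [Equiv.apply_symm_apply] at h1 h2
      omega
    · ext i j
      rw [happ]
      simp [Matrix.reindexAlgEquiv, Matrix.reindex, Matrix.submatrix_apply]

end Stmt4Proof

/-- `Mₙ(K)(γ₁,…,γₙ)` is graded isomorphic to `Mₙ(K)(δ₁,…,δₙ)` iff the shifts agree
up to a permutation and a common translation. -/
theorem stmt4 (K : Type*) [Field K] (n : ℕ) (hn : 0 < n) (γ δ : Fin n → ℤ) :
    (∃ φ : Matrix (Fin n) (Fin n) K ≃+* Matrix (Fin n) (Fin n) K,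
        ∀ d : ℤ, φ '' matComp K γ d = matComp K δ d) ↔
      ∃ (c : ℤ) (π : Equiv.Perm (Fin n)), ∀ i, δ i = γ (π i) + c := by
  constructor
  · rintro ⟨φ, hφ⟩
    exact Stmt4Proof.forward hn γ δ φ hφ
  · rintro ⟨c, π, h⟩
    exact Stmt4Proof.easy γ δ c π h
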